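/- If (R, μ, P, σ) is a strongly braided commutative Rota–Baxter algebra of weight 0 (so μσ = μ), then the induced operations ≺_P(x⊗y) = xP(y) and ≻_P(x⊗y) = P(x)y satisfy ≺_P ∘ σ = ≻_P and ≻_P ∘ σ = ≺_P; that is, (R, ≺_P, ≻_P, σ) is a braided commutative dendriform algebra. -/
import Mathlib

set_option maxHeartbeats 1000000
noncomputable section
open TensorProduct LinearMap

/-- `f ⊗ id` on a triple tensor product. -/
def op12 {k M : Type} [Field k] [AddCommGroup M] [Module k M]
    (f : M ⊗[k] M →ₗ[k] M ⊗[k] M) : (M ⊗[k] M) ⊗[k] M →ₗ[k] (M ⊗[k] M) ⊗[k] M :=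
  rTensor M f

/-- `id ⊗ f` on a triple tensor product. -/
def op23 {k M : Type} [Field k] [AddCommGroup M] [Module k M]
    (f : M ⊗[k] M →ₗ[k] M ⊗[k] M) : (M ⊗[k] M) ⊗[k] M →ₗ[k] (M ⊗[k] M) ⊗[k] M :=
  (TensorProduct.assoc k M M M).symm.toLinearMap ∘ₗ lTensor M f
    ∘ₗ (TensorProduct.assoc k M M M).toLinearMap

/-- `id ⊗ f ⊗ id` on a fourfold tensor product (`f` acting on the middle two factors). -/
def midOp {k M : Type} [Field k] [AddCommGroup M] [Module k M]
    (f : M ⊗[k] M →ₗ[k] M ⊗[k] M) :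
    (M ⊗[k] M) ⊗[k] (M ⊗[k] M) →ₗ[k] (M ⊗[k] M) ⊗[k] (M ⊗[k] M) :=
  (TensorProduct.assoc k M M (M ⊗[k] M)).symm.toLinearMap
    ∘ₗ lTensor M (TensorProduct.assoc k M M M).toLinearMap
    ∘ₗ lTensor M (rTensor M f)
    ∘ₗ lTensor M (TensorProduct.assoc k M M M).symm.toLinearMap
    ∘ₗ (TensorProduct.assoc k M M (M ⊗[k] M)).toLinearMap

/-- For a strongly braided *commutative* Rota–Baxter algebra of weight `0`,
the induced dendriform operations satisfy `≺_P ∘ σ = ≻_P` and `≻_P ∘ σ = ≺_P`,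
i.e. `(R, ≺_P, ≻_P, σ)` is a braided commutative dendriform algebra. -/
theorem strongly_braided_comm_RB_gives_braided_comm_dendriform
    {k R : Type} [Field k] [AddCommGroup R] [Module k R]
    (mu : R ⊗[k] R →ₗ[k] R)
    (hassoc : mu ∘ₗ rTensor R mu
      = mu ∘ₗ lTensor R mu ∘ₗ (TensorProduct.assoc k R R R).toLinearMap)
    (sg : R ⊗[k] R →ₗ[k] R ⊗[k] R)
    (hybe : op12 sg ∘ₗ op23 sg ∘ₗ op12 sg = op23 sg ∘ₗ op12 sg ∘ₗ op23 sg)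
    (hba1 : lTensor R mu ∘ₗ (TensorProduct.assoc k R R R).toLinearMap ∘ₗ op12 sg ∘ₗ op23 sg
      = sg ∘ₗ rTensor R mu)
    (hba2 : rTensor R mu ∘ₗ op23 sg ∘ₗ op12 sg
      = sg ∘ₗ lTensor R mu ∘ₗ (TensorProduct.assoc k R R R).toLinearMap)
    -- braided commutativity μσ = μ :
    (hcomm : mu ∘ₗ sg = mu)
    (P : R →ₗ[k] R)
    -- Rota–Baxter identity of weight 0 :
    (hrb : ∀ x y : R, mu (P x ⊗ₜ[k] P y) = P (mu (x ⊗ₜ[k] P y)) + P (mu (P x ⊗ₜ[k] y)))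
    (hright : sg ∘ₗ rTensor R P = lTensor R P ∘ₗ sg)
    (hleft : sg ∘ₗ lTensor R P = rTensor R P ∘ₗ sg) :
    (mu ∘ₗ lTensor R P) ∘ₗ sg = mu ∘ₗ rTensor R P
      ∧ (mu ∘ₗ rTensor R P) ∘ₗ sg = mu ∘ₗ lTensor R P := by
  constructor
  · calc (mu ∘ₗ lTensor R P) ∘ₗ sg = mu ∘ₗ (lTensor R P ∘ₗ sg) := by rw [comp_assoc]
    _ = mu ∘ₗ (sg ∘ₗ rTensor R P) := by rw [hright]
    _ = (mu ∘ₗ sg) ∘ₗ rTensor R P := by rw [comp_assoc]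
    _ = mu ∘ₗ rTensor R P := by rw [hcomm]
  · calc (mu ∘ₗ rTensor R P) ∘ₗ sg = mu ∘ₗ (rTensor R P ∘ₗ sg) := by rw [comp_assoc]
    _ = mu ∘ₗ (sg ∘ₗ lTensor R P) := by rw [hleft]
    _ = (mu ∘ₗ sg) ∘ₗ lTensor R P := by rw [comp_assoc]
    _ = mu ∘ₗ lTensor R P := by rw [hcomm]
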